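/- In a type theory with an interval type, homogeneous path types, and the global coercion operation coe_1 (transport from left to an arbitrary point with coe_1(D, d, left) ≡ d), one can define the identity-type eliminator J satisfying its typing rule, and moreover J applied to refl is propositionally equal to the input: there is a term Jeq(D, d, a) : Id(J(D, d, a, a, refl(a)), d[a]). -/

import Mathlib

/-- A (shallow) model of a type theory with an interval type `I` (endpoints `lf`, `rt`),
the connection `sq`, heterogeneous path types `Path` and coercion `coe1`
(`coe0` is the special case transporting from `lf` to `rt`). -/
structure CTT where
  Ty : Type
  Tm : Ty → Type
  I : Ty
  lf : Tm I
  rt : Tm I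
  sq : Tm I → Tm I → Tm I
  sq_il : ∀ i, sq i lf = lf
  sq_lj : ∀ j, sq lf j = lf
  sq_rj : ∀ j, sq rt j = j
  Path : (A : Tm I → Ty) → Tm (A lf) → Tm (A rt) → Ty
  path : {A : Tm I → Ty} → (f : ∀ i, Tm (A i)) → Tm (Path A (f lf) (f rt))
  pat : {A : Tm I → Ty} → {a : Tm (A lf)} → {a' : Tm (A rt)} →
      Tm (Path A a a') → (i : Tm I) → Tm (A i)
  pat_beta : ∀ {A : Tm I → Ty} (f : ∀ i, Tm (A i)) (i : Tm I), pat (path f) i = f i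
  pat_lf : ∀ {A : Tm I → Ty} {a : Tm (A lf)} {a' : Tm (A rt)} (p : Tm (Path A a a')),
      pat p lf = a
  pat_rt : ∀ {A : Tm I → Ty} {a : Tm (A lf)} {a' : Tm (A rt)} (p : Tm (Path A a a')),
      pat p rt = a'
  path_eta : ∀ {A : Tm I → Ty} {a : Tm (A lf)} {a' : Tm (A rt)} (p : Tm (Path A a a')),
      HEq (path (fun i => pat p i)) p
  coe1 : (D : Tm I → Ty) → Tm (D lf) → (i : Tm I) → Tm (D i)
  coe1_lf : ∀ D d, coe1 D d lf = d

namespace CTT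

variable (M : CTT)

/-- Homogeneous path types `a ⇝ a'`. -/
def HP (A : M.Ty) (a a' : M.Tm A) : M.Ty := M.Path (fun _ => A) a a'

/-- `refl`. -/
def rfl' {A : M.Ty} (a : M.Tm A) : M.Tm (M.HP A a a) := M.path (fun _ => a)

/-- Coercion from the fiber over `left` to the fiber over `right`. -/
def coe0 (D : M.Tm M.I → M.Ty) (d : M.Tm (D M.lf)) : M.Tm (D M.rt) := M.coe1 D d M.rt

/-- Concatenation of homogeneous paths. -/
def conc {A : M.Ty} {a b c : M.Tm A} (p : M.Tm (M.HP A a b)) (q : M.Tm (M.HP A b c)) :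
    M.Tm (M.HP A a c) :=
  cast (show M.Tm (M.HP A a (M.pat q M.rt)) = M.Tm (M.HP A a c) by
    exact congrArg (fun x => M.Tm (M.HP A a x)) (M.pat_rt q))
    (M.coe1 (fun i => M.HP A a (M.pat q i))
      (cast (show M.Tm (M.HP A a b) = M.Tm (M.HP A a (M.pat q M.lf)) by
        exact (congrArg (fun x => M.Tm (M.HP A a x)) (M.pat_lf q)).symm) p) M.rt)

/-- Inversion of homogeneous paths. -/
def symm' {A : M.Ty} {a b : M.Tm A} (p : M.Tm (M.HP A a b)) : M.Tm (M.HP A b a) :=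
  cast (show M.Tm (M.HP A (M.pat p M.rt) a) = M.Tm (M.HP A b a) by
    exact congrArg (fun x => M.Tm (M.HP A x a)) (M.pat_rt p))
    (M.coe1 (fun i => M.HP A (M.pat p i) a)
      (cast (show M.Tm (M.HP A a a) = M.Tm (M.HP A (M.pat p M.lf) a) by
        exact (congrArg (fun x => M.Tm (M.HP A x a)) (M.pat_lf p)).symm)
        (M.rfl' a)) M.rt)

/-- Action of a function on paths. -/
def apm {A B : M.Ty} (g : M.Tm A → M.Tm B) {a a' : M.Tm A} (p : M.Tm (M.HP A a a')) :
    M.Tm (M.HP B (g a) (g a')) :=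
  cast (show M.Tm (M.HP B (g (M.pat p M.lf)) (g (M.pat p M.rt))) = M.Tm (M.HP B (g a) (g a'))
      by exact congrArg₂ (fun x y => M.Tm (M.HP B (g x) (g y))) (M.pat_lf p) (M.pat_rt p))
    (M.path (fun i => g (M.pat p i)))

end CTT


namespace CTTAux
open CTT
variable (M : CTT)

lemma path_congr {A : M.Tm M.I → M.Ty} {f g : ∀ i, M.Tm (A i)} (h : f = g) :
    HEq (M.path f) (M.path g) := by subst h; rfl

lemma D_congr {A : M.Ty} (D : (x y : M.Tm A) → M.Tm (M.HP A x y) → M.Ty) (a : M.Tm A)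
    {b b' : M.Tm A} (hb : b = b') {q : M.Tm (M.HP A a b)} {q' : M.Tm (M.HP A a b')}
    (hq : HEq q q') : D a b q = D a b' q' := by subst hb; cases hq; rfl

/-- The connection square path from `a` to `pat p (sq i rt)`. -/
noncomputable def Q {A : M.Ty} {a a' : M.Tm A} (p : M.Tm (M.HP A a a')) (i : M.Tm M.I) :
    M.Tm (M.HP A a (M.pat p (M.sq i M.rt))) :=
  cast (show M.Tm (M.HP A (M.pat p (M.sq i M.lf)) (M.pat p (M.sq i M.rt))) = _ by
      rw [M.sq_il]; exact congrArg (fun x => M.Tm (M.HP A x (M.pat p (M.sq i M.rt)))) (M.pat_lf p))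
    (M.path (fun j => M.pat p (M.sq i j)))

/-- The family along which we coerce in the definition of `J`. -/
noncomputable def Jfam {A : M.Ty} (D : (x y : M.Tm A) → M.Tm (M.HP A x y) → M.Ty)
    {a a' : M.Tm A} (p : M.Tm (M.HP A a a')) (i : M.Tm M.I) : M.Ty :=
  D a (M.pat p (M.sq i M.rt)) (Q M p i)

lemma Q_heq {A : M.Ty} {a a' : M.Tm A} (p : M.Tm (M.HP A a a')) (i : M.Tm M.I) :
    HEq (Q M p i) (M.path (fun j => M.pat p (M.sq i j))) := cast_heq _ _

lemma Jfam_lf {A : M.Ty} (D : (x y : M.Tm A) → M.Tm (M.HP A x y) → M.Ty)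
    {a a' : M.Tm A} (p : M.Tm (M.HP A a a')) :
    Jfam M D p M.lf = D a a (M.rfl' a) := by
  have hb : M.pat p (M.sq M.lf M.rt) = a := by rw [M.sq_lj]; exact M.pat_lf p
  have hf : (fun j => M.pat p (M.sq M.lf j)) = (fun _ => a) := by
    funext j; rw [M.sq_lj]; exact M.pat_lf p
  have hq : HEq (Q M p M.lf) (M.rfl' a) :=
    (Q_heq M p M.lf).trans (path_congr M hf)
  exact D_congr M D a hb hq

lemma Jfam_rt {A : M.Ty} (D : (x y : M.Tm A) → M.Tm (M.HP A x y) → M.Ty)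
    {a a' : M.Tm A} (p : M.Tm (M.HP A a a')) :
    Jfam M D p M.rt = D a a' p := by
  have hb : M.pat p (M.sq M.rt M.rt) = a' := by rw [M.sq_rj]; exact M.pat_rt p
  have hf : (fun j => M.pat p (M.sq M.rt j)) = (fun j => M.pat p j) := by
    funext j; rw [M.sq_rj]
  have hq : HEq (Q M p M.rt) p :=
    ((Q_heq M p M.rt).trans (path_congr M hf)).trans (M.path_eta p)
  exact D_congr M D a hb hq

/-- The eliminator `J`. -/
noncomputable def Jdef {A : M.Ty} (D : (x y : M.Tm A) → M.Tm (M.HP A x y) → M.Ty)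
    (d : ∀ x : M.Tm A, M.Tm (D x x (M.rfl' x))) (a a' : M.Tm A) (p : M.Tm (M.HP A a a')) :
    M.Tm (D a a' p) :=
  cast (congrArg M.Tm (Jfam_rt M D p))
    (M.coe1 (Jfam M D p) (cast (congrArg M.Tm (Jfam_lf M D p)).symm (d a)) M.rt)

lemma Jfam_refl_const {A : M.Ty} (D : (x y : M.Tm A) → M.Tm (M.HP A x y) → M.Ty)
    (a : M.Tm A) (i : M.Tm M.I) :
    Jfam M D (M.rfl' a) i = D a a (M.rfl' a) := by
  have hb : M.pat (M.rfl' a) (M.sq i M.rt) = a := M.pat_beta _ _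
  have hf : (fun j => M.pat (M.rfl' a) (M.sq i j)) = (fun _ => a) := by
    funext j; exact M.pat_beta _ _
  have hq : HEq (Q M (M.rfl' a) i) (M.rfl' a) :=
    (Q_heq M (M.rfl' a) i).trans (path_congr M hf)
  exact D_congr M D a hb hq

end CTTAux

/-- In a type theory with an interval type, homogeneous path types and the
global coercion `coe_1` (transport from `left` to an arbitrary point, with
`coe_1(D,d,left) ≡ d`), one can define the identity-type eliminator `J`
(where `Id(a,a') := a ⇝ a'` and `refl(a) := path(λx.a)`) satisfying its typing rule, and
moreover `J` applied to `refl` is propositionally equal to the input: there is a term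
`Jeq(D,d,a) : Id(J(D,d,a,a,refl(a)), d[a])`. -/
theorem stmt7 (M : CTT) :
    ∃ J : (A : M.Ty) → (D : (x y : M.Tm A) → M.Tm (M.HP A x y) → M.Ty) →
        (d : ∀ x : M.Tm A, M.Tm (D x x (M.rfl' x))) →
        (a a' : M.Tm A) → (p : M.Tm (M.HP A a a')) → M.Tm (D a a' p),
      ∀ (A : M.Ty) (D : (x y : M.Tm A) → M.Tm (M.HP A x y) → M.Ty)
        (d : ∀ x : M.Tm A, M.Tm (D x x (M.rfl' x))) (a : M.Tm A),
        Nonempty (M.Tm (M.HP (D a a (M.rfl' a)) (J A D d a a (M.rfl' a)) (d a))) := by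
  classical
  refine ⟨fun A D d a a' p => CTTAux.Jdef M D d a a' p, fun A D d a => ?_⟩
  -- the path witnessing `J(refl) ⇝ d a`
  set C : M.Tm M.I → M.Ty := CTTAux.Jfam M D (M.rfl' a) with hC
  have hconst : ∀ i, C i = D a a (M.rfl' a) := CTTAux.Jfam_refl_const M D a
  set d0 : M.Tm (C M.lf) :=
    cast (congrArg M.Tm (CTTAux.Jfam_lf M D (M.rfl' a))).symm (d a) with hd0
  let c : ∀ i, M.Tm (D a a (M.rfl' a)) := fun i =>
    cast (congrArg M.Tm (hconst i)) (M.coe1 C d0 i)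
  have hlf : c M.lf = d a := by
    have h1 : HEq (c M.lf) (M.coe1 C d0 M.lf) := cast_heq _ _
    have h2 : HEq d0 (d a) := cast_heq _ _
    rw [M.coe1_lf] at h1
    exact eq_of_heq (h1.trans h2)
  have hrt : c M.rt = CTTAux.Jdef M D d a a (M.rfl' a) := by
    have h1 : HEq (c M.rt) (M.coe1 C d0 M.rt) := cast_heq _ _
    have h2 : HEq (CTTAux.Jdef M D d a a (M.rfl' a)) (M.coe1 C d0 M.rt) := cast_heq _ _
    exact eq_of_heq (h1.trans h2.symm)
  refine ⟨M.symm' ?_⟩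
  have hp := M.path c
  rw [hlf, hrt] at hp
  exact hp
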